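/- For all real numbers v ≥ 1 and K ≥ e, the integral ∫₀¹ √(v · ln(K/ε)) dε is at most 2·√(v · ln K). -/
import Mathlib

open MeasureTheory

theorem stmt_0 (v K : ℝ) (hv : 1 ≤ v) (hK : Real.exp 1 ≤ K) :
    ∫ ε in (0:ℝ)..1, Real.sqrt (v * Real.log (K / ε)) ≤ 2 * Real.sqrt (v * Real.log K) := by
  have hK0 : (0:ℝ) < K := lt_of_lt_of_le (Real.exp_pos 1) hK
  have hlogK : 1 ≤ Real.log K := by
    rw [Real.le_log_iff_exp_le hK0]; exact hK
  set c := Real.sqrt (v * Real.log K) with hcdef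
  have hc : 0 ≤ c := Real.sqrt_nonneg _
  -- pointwise bound on (0,1]
  have key : ∀ x ∈ Set.Ioc (0:ℝ) 1,
      Real.sqrt (v * Real.log (K / x)) ≤ c * x ^ (-(1/2) : ℝ) := by
    intro x hx
    obtain ⟨hx0, hx1⟩ := hx
    have hxne : x ≠ 0 := ne_of_gt hx0
    have h1 : Real.log x⁻¹ ≤ x⁻¹ - 1 := Real.log_le_sub_one_of_pos (by positivity)
    rw [Real.log_inv] at h1
    have hxinv : x * x⁻¹ = 1 := mul_inv_cancel₀ hxne
    have h2 : -Real.log x * x ≤ 1 - x := by nlinarith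
    have hlog : Real.log (K / x) ≤ Real.log K / x := by
      rw [Real.log_div (ne_of_gt hK0) hxne, le_div_iff₀ hx0]
      nlinarith [mul_nonneg (sub_nonneg.2 hx1) (sub_nonneg.2 hlogK)]
    calc Real.sqrt (v * Real.log (K / x)) ≤ Real.sqrt ((v * Real.log K) * x⁻¹) := by
          apply Real.sqrt_le_sqrt
          rw [mul_assoc, ← div_eq_mul_inv]
          have hv0 : (0:ℝ) ≤ v := le_trans zero_le_one hv
          exact mul_le_mul_of_nonneg_left hlog hv0
      _ = c * x ^ (-(1/2) : ℝ) := by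
          rw [Real.sqrt_mul (by nlinarith : (0:ℝ) ≤ v * Real.log K), hcdef,
            Real.sqrt_inv, Real.rpow_neg hx0.le, ← Real.sqrt_eq_rpow]
  -- integrability of the bounding function
  have hg : IntervalIntegrable (fun x : ℝ => c * x ^ (-(1/2) : ℝ)) volume 0 1 :=
    (intervalIntegral.intervalIntegrable_rpow' (by norm_num)).const_mul c
  -- integrability of the integrand
  have hmeas : Measurable fun x : ℝ => Real.sqrt (v * Real.log (K / x)) := by
    exact Real.continuous_sqrt.measurable.comp
      ((measurable_const.div measurable_id).log.const_mul v)
  have hf : IntervalIntegrable (fun x : ℝ => Real.sqrt (v * Real.log (K / x))) volume 0 1 := by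
    rw [intervalIntegrable_iff_integrableOn_Ioc_of_le zero_le_one]
    apply Integrable.mono' ((intervalIntegrable_iff_integrableOn_Ioc_of_le zero_le_one).1 hg)
      hmeas.aestronglyMeasurable
    filter_upwards [ae_restrict_mem measurableSet_Ioc] with x hx
    rw [Real.norm_eq_abs, abs_of_nonneg (Real.sqrt_nonneg _)]
    exact key x hx
  have hmono : ∫ ε in (0:ℝ)..1, Real.sqrt (v * Real.log (K / ε))
      ≤ ∫ x in (0:ℝ)..1, c * x ^ (-(1/2) : ℝ) := by
    apply intervalIntegral.integral_mono_on zero_le_one hf hg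
    intro x hx
    rcases eq_or_lt_of_le hx.1 with h0 | h0
    · rw [← h0]
      simp [Real.zero_rpow (by norm_num : (-(1/2):ℝ) ≠ 0)]
    · exact key x ⟨h0, hx.2⟩
  have hval : ∫ x in (0:ℝ)..1, c * x ^ (-(1/2) : ℝ) = 2 * c := by
    rw [intervalIntegral.integral_const_mul, integral_rpow (Or.inl (by norm_num))]
    rw [Real.zero_rpow (by norm_num : (-(1/2)+1:ℝ) ≠ 0), Real.one_rpow]
    ring
  rw [hval] at hmono
  exact hmono
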